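/- Let p : ℕ → (0,1) be a sequence with n·p(n) → ∞ and p(n)·(ln n)² → 0 as n → ∞. Then for all sufficiently large n, the largest k ∈ {1,…,n} with φ(n,k,p(n)) ≥ 1 equals either k₀(n) or k₀(n)+1. -/

import Mathlib

open Filter

/-- `phi n k p = C(n,k)·k^(k-2)·p^(k-1)·(1-p)^(k(k-1)/2-k+1)`, the expected number of
`k`-vertex induced trees in `G_{n,p}` (the exponent `k(k-1)/2 - k + 1` is written as
`k(k-1)/2 - (k-1)`, which agrees with it for every `k ≥ 1`, and `k^(k-2)` is the real
power). -/
noncomputable def phi (n k : ℕ) (p : ℝ) : ℝ :=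
  (n.choose k : ℝ) * (k : ℝ) ^ ((k : ℝ) - 2) * p ^ (k - 1) *
    (1 - p) ^ (k * (k - 1) / 2 - (k - 1))

/-- `kzero p n = max{k ∈ {1,…,n} : phi n k (p n) > ln (n·p n)}`. -/
noncomputable def kzero (p : ℕ → ℝ) (n : ℕ) : ℕ :=
  sSup {k : ℕ | 1 ≤ k ∧ k ≤ n ∧ Real.log (n * p n) < phi n k (p n)}

lemma mylog_le_two_sqrt {x : ℝ} (hx : 1 ≤ x) : Real.log x ≤ 2 * Real.sqrt x := by
  have h0 : (0:ℝ) ≤ x := by linarith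
  have h1 : Real.log (Real.sqrt x) ≤ Real.sqrt x - 1 :=
    Real.log_le_sub_one_of_pos (Real.sqrt_pos.2 (by linarith))
  have h2 : Real.log (Real.sqrt x) = Real.log x / 2 := Real.log_sqrt h0
  linarith [Real.sqrt_nonneg x]

lemma mysqrt_le {x c : ℝ} (hc : 0 < c) (hx : c^2 ≤ x) : Real.sqrt x ≤ x / c := by
  have h0 : (0:ℝ) ≤ x := le_trans (by positivity) hx
  have h1 : c ≤ Real.sqrt x := by
    nlinarith [Real.sq_sqrt h0, Real.sqrt_nonneg x]
  rw [le_div_iff₀ hc]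
  nlinarith [Real.sq_sqrt h0]

lemma mylog_le_div {x c : ℝ} (hc : 1 ≤ c) (hx : c^2 ≤ x) : Real.log x ≤ 2 * x / c := by
  have h1 : 1 ≤ x := le_trans (by nlinarith) hx
  calc Real.log x ≤ 2 * Real.sqrt x := mylog_le_two_sqrt h1
    _ ≤ 2 * (x / c) := by
        have := mysqrt_le (lt_of_lt_of_le one_pos hc) hx
        linarith
    _ = 2 * x / c := by ring

lemma phi_one (n : ℕ) (q : ℝ) : phi n 1 q = n := by
  simp [phi]

lemma exponent_id {k : ℕ} (hk : 1 ≤ k) :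
    (k+1) * k / 2 - k = (k * (k - 1) / 2 - (k - 1)) + (k - 1) := by
  obtain ⟨j, rfl⟩ := Nat.exists_eq_add_of_le hk
  have e1 : (1 + j) - 1 = j := by omega
  rw [e1]
  have h1 : (1 + j + 1) * (1 + j) = (1 + j) * j + (1 + j) * 2 := by ring
  have key : (1 + j + 1) * (1 + j) / 2 = (1 + j) * j / 2 + (1 + j) := by
    rw [h1, Nat.add_mul_div_right _ _ (by norm_num : 0 < 2)]
  have hge : 2 * j ≤ (1 + j) * j := by
    have : j * j + j * 1 ≥ j + j := by nlinarith
    nlinarith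
  omega

lemma base_le {k : ℕ} (hk : 1 ≤ k) :
    ((k:ℝ)+1) ^ ((k:ℝ) - 2) ≤ Real.exp 1 * (k:ℝ) ^ ((k:ℝ) - 2) := by
  rcases eq_or_lt_of_le hk with h | h
  · rw [← h]
    push_cast
    rw [show (1:ℝ) - 2 = -1 by norm_num, Real.rpow_neg_one, Real.rpow_neg_one]
    norm_num
    calc (1:ℝ)/2 ≤ 1 := by norm_num
      _ ≤ Real.exp 1 := Real.one_le_exp (by norm_num)
  · have hk2 : (2:ℕ) ≤ k := h
    have hkpos : (0:ℝ) < k := by positivity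
    have he2 : (0:ℝ) ≤ (k:ℝ) - 2 := by
      have : (2:ℝ) ≤ (k:ℝ) := by exact_mod_cast hk2
      linarith
    have hsplit : ((k:ℝ)+1) = (k:ℝ) * (1 + 1/(k:ℝ)) := by field_simp
    rw [hsplit, Real.mul_rpow (le_of_lt hkpos) (by positivity)]
    rw [mul_comm (Real.exp 1)]
    apply mul_le_mul_of_nonneg_left _ (by positivity)
    have h1 : (1 + 1/(k:ℝ)) ≤ Real.exp (1/(k:ℝ)) := by
      have := Real.add_one_le_exp (1/(k:ℝ)); linarith
    calc (1 + 1/(k:ℝ)) ^ ((k:ℝ) - 2)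
        ≤ (Real.exp (1/(k:ℝ))) ^ ((k:ℝ) - 2) :=
          Real.rpow_le_rpow (by positivity) h1 he2
      _ = Real.exp (1/(k:ℝ) * ((k:ℝ) - 2)) := (Real.exp_mul _ _).symm
      _ ≤ Real.exp 1 := by
          apply Real.exp_le_exp.2
          rw [div_mul_eq_mul_div, one_mul, div_le_one hkpos]
          linarith


lemma phi_ratio {n k : ℕ} (hk : 1 ≤ k) (hkn : k + 1 ≤ n) {q : ℝ} (hq0 : 0 < q) (hq1 : q < 1) :
    phi n (k+1) q ≤ phi n k q * ((n:ℝ) * Real.exp 1 * q * Real.exp (-(q * ((k - 1 : ℕ) : ℝ)))) := by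
  have hkpos : (0:ℝ) < (k:ℝ) + 1 := by positivity
  rw [← mul_le_mul_iff_of_pos_right hkpos]
  have hC : (n.choose k : ℝ) * ((n:ℝ) - (k:ℝ)) = (n.choose (k+1) : ℝ) * ((k:ℝ) + 1) := by
    have hcast : ((n - k : ℕ) : ℝ) = (n:ℝ) - (k:ℝ) := by
      have hkn' : k ≤ n := by omega
      push_cast [hkn']; ring
    calc (n.choose k : ℝ) * ((n:ℝ) - (k:ℝ)) = ((n.choose k * (n - k) : ℕ) : ℝ) := by
          push_cast [hcast]; ring
      _ = ((n.choose (k+1) * (k+1) : ℕ) : ℝ) := by rw [Nat.choose_succ_right_eq]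
      _ = (n.choose (k+1) : ℝ) * ((k:ℝ) + 1) := by push_cast; ring
  have hrpow : ((↑(k+1)):ℝ) ^ (((↑(k+1)):ℝ) - 2) = ((k:ℝ) + 1) * (((k:ℝ) + 1) ^ ((k:ℝ) - 2)) := by
    push_cast
    rw [show (k:ℝ) + 1 - 2 = 1 + ((k:ℝ) - 2) by ring, Real.rpow_add hkpos, Real.rpow_one]
  have hqpow : q ^ k = q ^ (k-1) * q := by
    conv_lhs => rw [← Nat.sub_add_cancel hk]
    rw [pow_succ]
  have hexp : (1 - q) ^ ((k+1) * k / 2 - k) =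
      (1 - q) ^ (k * (k-1) / 2 - (k-1)) * (1 - q) ^ (k - 1) := by
    rw [← pow_add, exponent_id hk]
  have h1q : (1 - q) ^ (k - 1) ≤ Real.exp (-(q * ((k - 1 : ℕ) : ℝ))) := by
    have hbase : 1 - q ≤ Real.exp (-q) := by
      have := Real.add_one_le_exp (-q); linarith
    calc (1 - q) ^ (k - 1) ≤ (Real.exp (-q)) ^ (k - 1) :=
          pow_le_pow_left₀ (by linarith) hbase _
      _ = Real.exp (-(q * ((k - 1 : ℕ) : ℝ))) := by
          rw [← Real.exp_nat_mul]; ring_nf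
  calc phi n (k+1) q * ((k:ℝ) + 1)
      = ((n.choose k : ℝ) * ((n:ℝ) - (k:ℝ))) * (((k:ℝ)+1) ^ ((k:ℝ)-2)) * (q ^ (k-1) * q) *
          ((1 - q) ^ (k * (k-1) / 2 - (k-1)) * (1 - q) ^ (k - 1)) * ((k:ℝ) + 1) := by
        rw [phi]
        simp only [Nat.add_sub_cancel]
        rw [hrpow, hqpow, hexp, hC]
        ring
    _ ≤ ((n.choose k : ℝ) * (n:ℝ)) * (Real.exp 1 * ((k:ℝ) ^ ((k:ℝ)-2))) * (q ^ (k-1) * q) *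
          ((1 - q) ^ (k * (k-1) / 2 - (k-1)) * Real.exp (-(q * ((k - 1 : ℕ) : ℝ)))) * ((k:ℝ) + 1) := by
        have hnk : (n:ℝ) - (k:ℝ) ≤ (n:ℝ) := by
          have : (0:ℝ) ≤ (k:ℝ) := by positivity
          linarith
        have hb := base_le hk
        have h01 : (0:ℝ) ≤ 1 - q := by linarith
        gcongr
    _ = phi n k q * ((n:ℝ) * Real.exp 1 * q * Real.exp (-(q * ((k - 1 : ℕ) : ℝ)))) * ((k:ℝ) + 1) := by
        rw [phi]; ring

set_option maxHeartbeats 1000000 in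
lemma phi_lower {n k : ℕ} {q L : ℝ} (hq0 : 0 < q) (hq1 : q ≤ 1/100)
    (hL : L = Real.log ((n:ℝ) * q)) (hL100 : 100 ≤ L)
    (hkl : 1.5 * L / q ≤ (k:ℝ)) (hku : (k:ℝ) ≤ 1.5 * L / q + 1) (h2k : 2 * k ≤ n) :
    L < phi n k q := by
  have hq1' : q < 1 := by linarith
  have hkR : (150:ℝ) * L ≤ (k:ℝ) := by
    calc (150:ℝ) * L = 1.5 * L / (1/100) := by ring
      _ ≤ 1.5 * L / q := by
          apply div_le_div_of_nonneg_left _ hq0 hq1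
          · linarith
      _ ≤ (k:ℝ) := hkl
  have hk15000 : (15000:ℝ) ≤ (k:ℝ) := by linarith
  have hk1 : 1 ≤ k := by exact_mod_cast (show (1:ℝ) ≤ (k:ℝ) by linarith)
  have hkpos : (0:ℝ) < (k:ℝ) := by exact_mod_cast Nat.pos_of_ne_zero (by omega)
  have hn1 : 1 ≤ n := by omega
  have hnpos : (0:ℝ) < (n:ℝ) := by exact_mod_cast (show 0 < n by omega)
  have hnq : (n:ℝ) * q = Real.exp L := by
    rw [hL, Real.exp_log (by positivity)]
  -- abbreviations
  set y : ℝ := q / (1 - q) with hy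
  have hy0 : 0 ≤ y := by
    apply div_nonneg (le_of_lt hq0); linarith
  set E : ℝ := (k:ℝ) * (L - Real.log 2) - (k:ℝ)^2 / 2 * y with hE
  set m : ℕ := k * (k-1) / 2 - (k-1) with hm
  -- m ≤ k^2/2
  have hmR : (m:ℝ) ≤ (k:ℝ)^2 / 2 := by
    have h1 : m ≤ k * k / 2 := by
      have : k * (k-1) / 2 ≤ k * k / 2 :=
        Nat.div_le_div_right (Nat.mul_le_mul_left k (Nat.sub_le k 1))
      omega
    calc (m:ℝ) ≤ ((k * k / 2 : ℕ) : ℝ) := by exact_mod_cast h1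
      _ ≤ ((k * k : ℕ) : ℝ) / 2 := Nat.cast_div_le
      _ = (k:ℝ)^2 / 2 := by push_cast; ring
  -- lower bound on (1-q)^m
  have hbase : Real.exp (-y) ≤ 1 - q := by
    have hq2 : (1:ℝ) - q ≠ 0 := by linarith
    have h1 : 1 + y = 1 / (1 - q) := by
      rw [hy]; field_simp; ring
    have h2 : 1 / (1 - q) ≤ Real.exp y := by
      rw [← h1]; linarith [Real.add_one_le_exp y]
    have h3 : Real.exp (-y) = 1 / Real.exp y := by
      rw [Real.exp_neg]; ring
    rw [h3]
    calc 1 / Real.exp y ≤ 1 / (1 / (1 - q)) := by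
          apply one_div_le_one_div_of_le
          · have : (0:ℝ) < 1 - q := by linarith
            positivity
          · exact h2
      _ = 1 - q := by field_simp
  have hP : Real.exp (-(y * ((k:ℝ)^2/2))) ≤ (1-q)^m := by
    calc Real.exp (-(y * ((k:ℝ)^2/2))) ≤ Real.exp (-(y * m)) := by
          apply Real.exp_le_exp.2
          have : y * (m:ℝ) ≤ y * ((k:ℝ)^2/2) := mul_le_mul_of_nonneg_left hmR hy0
          linarith
      _ = Real.exp (-y) ^ m := by rw [← Real.exp_nat_mul]; ring_nf
      _ ≤ (1-q)^m := pow_le_pow_left₀ (by positivity) hbase m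
  -- lower bound on choose
  have hchoose : ((n:ℝ)/2)^k / (k:ℝ)^(k:ℕ) ≤ (n.choose k : ℝ) := by
    have h1 : ((n + 1 - k : ℕ)^k : ℝ) / (Nat.factorial k : ℝ) ≤ (n.choose k : ℝ) := Nat.pow_le_choose k n
    have h2 : (n:ℝ)/2 ≤ ((n + 1 - k : ℕ) : ℝ) := by
      have h3 : n ≤ 2 * (n + 1 - k) := by omega
      have h4 : (n:ℝ) ≤ 2 * ((n + 1 - k : ℕ) : ℝ) := by exact_mod_cast h3
      linarith
    have h5 : (Nat.factorial k : ℝ) ≤ (k:ℝ)^(k:ℕ) := by exact_mod_cast Nat.factorial_le_pow k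
    calc ((n:ℝ)/2)^k / (k:ℝ)^(k:ℕ) ≤ (((n + 1 - k : ℕ) : ℝ))^k / (Nat.factorial k : ℝ) := by
          apply div_le_div₀ (by positivity) (pow_le_pow_left₀ (by positivity) h2 k)
            (by exact_mod_cast k.factorial_pos) h5
      _ ≤ (n.choose k : ℝ) := by push_cast at h1 ⊢; exact h1
  -- rpow split
  have hA : (k:ℝ) ^ ((k:ℝ) - 2) = (k:ℝ)^(k:ℕ) / (k:ℝ)^2 := by
    rw [show ((k:ℝ) - 2) = (k:ℝ) - (2:ℕ) by push_cast; ring]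
    rw [Real.rpow_sub hkpos, Real.rpow_natCast, Real.rpow_natCast]
  have hQ : q ^ (k - 1) = q ^ (k:ℕ) / q := by
    conv_lhs => rw [show k - 1 = k - 1 from rfl]
    rw [eq_div_iff (ne_of_gt hq0), ← pow_succ, Nat.sub_add_cancel hk1]
  -- Part A : exp E / (q * k^2) ≤ phi
  have hPartA : Real.exp E / (q * (k:ℝ)^2) ≤ phi n k q := by
    have hpow : ((n:ℝ)/2)^(k:ℕ) * q^(k:ℕ) = Real.exp ((k:ℝ) * (L - Real.log 2)) := by
      rw [← mul_pow]
      have : (n:ℝ)/2 * q = Real.exp (L - Real.log 2) := by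
        rw [Real.exp_sub, Real.exp_log (by norm_num : (0:ℝ) < 2), ← hnq]; ring
      rw [this, ← Real.exp_nat_mul]
    have hEeq : Real.exp E = ((n:ℝ)/2)^(k:ℕ) * q^(k:ℕ) * Real.exp (-(y * ((k:ℝ)^2/2))) := by
      rw [hpow, ← Real.exp_add, hE]; ring_nf
    calc Real.exp E / (q * (k:ℝ)^2)
        = (((n:ℝ)/2)^k / (k:ℝ)^(k:ℕ)) * ((k:ℝ)^(k:ℕ) / (k:ℝ)^2) * (q^(k:ℕ) / q) *
            Real.exp (-(y * ((k:ℝ)^2/2))) := by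
          rw [hEeq]
          field_simp
      _ ≤ (n.choose k : ℝ) * ((k:ℝ)^(k:ℕ) / (k:ℝ)^2) * (q^(k:ℕ) / q) * (1-q)^m := by
          gcongr
      _ = phi n k q := by
          rw [phi, hA, hQ, hm]
  -- Part B : L < exp E / (q * k^2)
  have hlog2 : Real.log 2 ≤ 1 := by
    have := Real.log_le_sub_one_of_pos (by norm_num : (0:ℝ) < 2); linarith
  have hlog2' : Real.log 2 ≤ 1 := hlog2
  have hkq : (k:ℝ) * q ≤ 1.5 * L + q := by
    have := mul_le_mul_of_nonneg_right hku (le_of_lt hq0)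
    calc (k:ℝ) * q ≤ (1.5 * L / q + 1) * q := this
      _ = 1.5 * L + q := by
          have hq0' : q ≠ 0 := ne_of_gt hq0
          field_simp
  have hyb : y ≤ q * (51/50) := by
    rw [hy, div_le_iff₀ (by linarith : (0:ℝ) < 1 - q)]
    nlinarith
  have hEb : (k:ℝ) * (L / 5) ≤ E := by
    have h1 : (k:ℝ)^2 / 2 * y ≤ (k:ℝ) * ((1.5 * L + q) * (51/100)) := by
      have e1 : (k:ℝ)^2 / 2 * y = (k:ℝ) * (((k:ℝ) * y) / 2) := by ring
      rw [e1]
      apply mul_le_mul_of_nonneg_left _ (le_of_lt hkpos)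
      have h2 : (k:ℝ) * y ≤ (k:ℝ) * (q * (51/50)) :=
        mul_le_mul_of_nonneg_left hyb (le_of_lt hkpos)
      have h3 : (k:ℝ) * (q * (51/50)) = ((k:ℝ) * q) * (51/50) := by ring
      linarith [h2, h3, hkq]
    have h4 : L / 5 ≤ L - Real.log 2 - (1.5 * L + q) * (51/100) := by linarith
    have h5 : (k:ℝ) * (L / 5) ≤ (k:ℝ) * (L - Real.log 2 - (1.5 * L + q) * (51/100)) :=
      mul_le_mul_of_nonneg_left h4 (le_of_lt hkpos)
    have h5' : (k:ℝ) * (L - Real.log 2 - (1.5 * L + q) * (51/100)) =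
        (k:ℝ) * (L - Real.log 2) - (k:ℝ) * ((1.5 * L + q) * (51/100)) := by ring
    rw [hE]
    linarith [h1, h5, h5']
  have hEpos : 0 < E :=
    lt_of_lt_of_le (mul_pos hkpos (show (0:ℝ) < L / 5 by linarith)) hEb
  have hlogL : Real.log L ≤ L / 5 := by
    have := mylog_le_div (by norm_num : (1:ℝ) ≤ 10) (by linarith : (10:ℝ)^2 ≤ L)
    linarith
  have hlogk : Real.log (k:ℝ) ≤ (k:ℝ) / 50 := by
    have := mylog_le_div (by norm_num : (1:ℝ) ≤ 100) (by linarith : (100:ℝ)^2 ≤ (k:ℝ))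
    linarith
  have hlogsum : Real.log (L * (k:ℝ)^2) < E := by
    clear_value E y
    have h1 : Real.log (L * (k:ℝ)^2) = Real.log L + 2 * Real.log (k:ℝ) := by
      rw [Real.log_mul (by positivity) (by positivity), Real.log_pow]
      push_cast; ring
    rw [h1]
    have c1 : L ≤ (k:ℝ) / 150 := by linarith
    have c2 : (k:ℝ) * 20 ≤ (k:ℝ) * (L / 5) :=
      mul_le_mul_of_nonneg_left (by linarith) (le_of_lt hkpos)
    linarith [hlogL, hlogk, c1, c2, hEb]
  have hPartB : L < Real.exp E / (q * (k:ℝ)^2) := by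
    rw [lt_div_iff₀ (by positivity)]
    have hLk : (0:ℝ) ≤ L * (k:ℝ)^2 := by positivity
    calc L * (q * (k:ℝ)^2) = (L * (k:ℝ)^2) * q := by ring
      _ ≤ (L * (k:ℝ)^2) * 1 := mul_le_mul_of_nonneg_left (by linarith) hLk
      _ = L * (k:ℝ)^2 := by ring
      _ < Real.exp E := by
          rw [← Real.exp_log (show (0:ℝ) < L * (k:ℝ)^2 by positivity)]
          exact Real.exp_lt_exp.2 hlogsum
  linarith


lemma main_fixed (n : ℕ) (q : ℝ) (hq0 : 0 < q) (hq1 : q ≤ 1/100)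
    (hL100 : 100 ≤ Real.log ((n:ℝ) * q)) :
    sSup {k : ℕ | 1 ≤ k ∧ k ≤ n ∧ 1 ≤ phi n k q} =
      sSup {k : ℕ | 1 ≤ k ∧ k ≤ n ∧ Real.log ((n:ℝ) * q) < phi n k q} ∨
    sSup {k : ℕ | 1 ≤ k ∧ k ≤ n ∧ 1 ≤ phi n k q} =
      sSup {k : ℕ | 1 ≤ k ∧ k ≤ n ∧ Real.log ((n:ℝ) * q) < phi n k q} + 1 := by
  obtain ⟨L, hL⟩ : ∃ L, L = Real.log ((n:ℝ) * q) := ⟨_, rfl⟩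
  rw [← hL] at hL100 ⊢
  have hq1' : q < 1 := by linarith
  have hn1 : 1 ≤ n := by
    by_contra h
    have hn0 : n = 0 := by omega
    rw [hn0] at hL
    simp at hL
    rw [hL] at hL100
    norm_num at hL100
  have hnpos : (0:ℝ) < (n:ℝ) := by exact_mod_cast (show 0 < n by omega)
  have hnq : (n:ℝ) * q = Real.exp L := by
    rw [hL, Real.exp_log (by positivity)]
  have hnqpos : (0:ℝ) < (n:ℝ) * q := by positivity
  have hbdd1 : BddAbove {k : ℕ | 1 ≤ k ∧ k ≤ n ∧ 1 ≤ phi n k q} :=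
    ((Set.finite_Iic n).subset (fun k hk => hk.2.1)).bddAbove
  have hbdd0 : BddAbove {k : ℕ | 1 ≤ k ∧ k ≤ n ∧ L < phi n k q} :=
    ((Set.finite_Iic n).subset (fun k hk => hk.2.1)).bddAbove
  have hLn : L < (n:ℝ) := by
    have h1 := Real.log_le_sub_one_of_pos hnqpos
    have h2 : (n:ℝ) * q ≤ (n:ℝ) := by nlinarith
    rw [← hL] at h1
    linarith
  have hne0 : Set.Nonempty {k : ℕ | 1 ≤ k ∧ k ≤ n ∧ L < phi n k q} := by
    refine ⟨1, le_refl 1, hn1, ?_⟩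
    rw [phi_one]; exact hLn
  have hne1 : Set.Nonempty {k : ℕ | 1 ≤ k ∧ k ≤ n ∧ 1 ≤ phi n k q} := by
    refine ⟨1, le_refl 1, hn1, ?_⟩
    rw [phi_one]; exact_mod_cast hn1
  have h01 : sSup {k : ℕ | 1 ≤ k ∧ k ≤ n ∧ L < phi n k q} ≤
      sSup {k : ℕ | 1 ≤ k ∧ k ≤ n ∧ 1 ≤ phi n k q} := by
    apply csSup_le_csSup hbdd1 hne0
    intro k hk
    exact ⟨hk.1, hk.2.1, by linarith [hk.2.2]⟩
  -- the witness k̂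
  obtain ⟨kh, hkh⟩ : ∃ m, m = ⌈1.5 * L / q⌉₊ := ⟨_, rfl⟩
  have hkl : 1.5 * L / q ≤ (kh:ℝ) := hkh ▸ Nat.le_ceil _
  have hku : (kh:ℝ) ≤ 1.5 * L / q + 1 := hkh ▸ le_of_lt (Nat.ceil_lt_add_one (by positivity))
  have hexpL : 3 * L + 2 * q ≤ Real.exp L := by
    have h1 : 1 + L/2 ≤ Real.exp (L/2) := by linarith [Real.add_one_le_exp (L/2)]
    have h2 : Real.exp (L/2) * Real.exp (L/2) = Real.exp L := by
      rw [← Real.exp_add]; ring_nf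
    nlinarith [Real.exp_pos (L/2)]
  have h2k : 2 * kh ≤ n := by
    have h3 : (2:ℝ) * (kh:ℝ) ≤ (n:ℝ) := by
      have h4 : (n:ℝ) = Real.exp L / q := by
        rw [eq_div_iff (ne_of_gt hq0)]; exact hnq
      have h6 : 2 * (kh:ℝ) ≤ (3 * L + 2 * q) / q := by
        rw [le_div_iff₀ hq0]
        have h5 := mul_le_mul_of_nonneg_right hku (le_of_lt hq0)
        have he : (1.5 * L / q + 1) * q = 1.5 * L + q := by field_simp
        nlinarith
      have h7 : (3 * L + 2 * q) / q ≤ Real.exp L / q := by gcongr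
      rw [h4]; linarith
    exact_mod_cast (by push_cast; linarith : ((2 * kh : ℕ) : ℝ) ≤ (n:ℝ))
  have hkR : (150:ℝ) * L ≤ (kh:ℝ) := by
    calc (150:ℝ) * L = 1.5 * L / (1/100) := by ring
      _ ≤ 1.5 * L / q := by
          apply div_le_div_of_nonneg_left _ hq0 hq1
          linarith
      _ ≤ (kh:ℝ) := hkl
  have hkh1 : 1 ≤ kh := by exact_mod_cast (show (1:ℝ) ≤ (kh:ℝ) by linarith)
  have hkhmem : kh ∈ {k : ℕ | 1 ≤ k ∧ k ≤ n ∧ L < phi n k q} :=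
    ⟨hkh1, by omega, phi_lower hq0 hq1 hL hL100 hkl hku h2k⟩
  have hkhle : kh ≤ sSup {k : ℕ | 1 ≤ k ∧ k ≤ n ∧ L < phi n k q} := le_csSup hbdd0 hkhmem
  -- main dichotomy
  by_contra hcon
  push_neg at hcon
  obtain ⟨hc1, hc2⟩ := hcon
  have hBA : sSup {k : ℕ | 1 ≤ k ∧ k ≤ n ∧ L < phi n k q} + 2 ≤
      sSup {k : ℕ | 1 ≤ k ∧ k ≤ n ∧ 1 ≤ phi n k q} := by omega
  obtain ⟨h11, h1n, hphi1⟩ := Nat.sSup_mem hne1 hbdd1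
  obtain ⟨k, hkk⟩ : ∃ m, m + 1 = sSup {k : ℕ | 1 ≤ k ∧ k ≤ n ∧ 1 ≤ phi n k q} :=
    ⟨sSup {k : ℕ | 1 ≤ k ∧ k ≤ n ∧ 1 ≤ phi n k q} - 1, by omega⟩
  have hkgt : sSup {k : ℕ | 1 ≤ k ∧ k ≤ n ∧ L < phi n k q} < k := by omega
  have hknotin : k ∉ {k : ℕ | 1 ≤ k ∧ k ≤ n ∧ L < phi n k q} :=
    fun hmem => absurd (le_csSup hbdd0 hmem) (by omega)
  have hkhk : kh + 1 ≤ k := by omega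
  have hk1 : 1 ≤ k := by omega
  have hkn : k + 1 ≤ n := by omega
  have hphik : phi n k q ≤ L := by
    by_contra hgt
    push_neg at hgt
    exact hknotin ⟨hk1, by omega, hgt⟩
  have hratio := phi_ratio hk1 hkn hq0 hq1'
  have hstuff : (0:ℝ) ≤ (n:ℝ) * Real.exp 1 * q * Real.exp (-(q * ((k - 1 : ℕ) : ℝ))) := by
    positivity
  have hb1 : phi n (k+1) q ≤ L * ((n:ℝ) * Real.exp 1 * q * Real.exp (-(q * ((k - 1 : ℕ) : ℝ)))) :=
    le_trans hratio (mul_le_mul_of_nonneg_right hphik hstuff)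
  have hexparg : 1.5 * L ≤ q * ((k - 1 : ℕ) : ℝ) := by
    have hc : (kh:ℝ) ≤ ((k - 1 : ℕ) : ℝ) := by exact_mod_cast (show kh ≤ k - 1 by omega)
    have h1 : 1.5 * L / q * q ≤ (kh:ℝ) * q := mul_le_mul_of_nonneg_right hkl (le_of_lt hq0)
    rw [div_mul_cancel₀ _ (ne_of_gt hq0)] at h1
    nlinarith
  have hb2 : L * ((n:ℝ) * Real.exp 1 * q * Real.exp (-(q * ((k - 1 : ℕ) : ℝ)))) < 1 := by
    have e1 : (n:ℝ) * Real.exp 1 * q * Real.exp (-(q * ((k - 1 : ℕ) : ℝ))) =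
        Real.exp (L + 1 - q * ((k - 1 : ℕ) : ℝ)) := by
      rw [show (n:ℝ) * Real.exp 1 * q * Real.exp (-(q * ((k - 1 : ℕ) : ℝ))) =
          ((n:ℝ) * q) * (Real.exp 1 * Real.exp (-(q * ((k - 1 : ℕ) : ℝ)))) by ring, hnq,
        ← Real.exp_add, ← Real.exp_add]
      ring_nf
    rw [e1]
    have e2 : L = Real.exp (Real.log L) := (Real.exp_log (by linarith)).symm
    have hlogL : Real.log L ≤ L / 5 := by
      have := mylog_le_div (by norm_num : (1:ℝ) ≤ 10) (by linarith : (10:ℝ)^2 ≤ L)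
      linarith
    calc L * Real.exp (L + 1 - q * ((k - 1 : ℕ) : ℝ))
        = Real.exp (Real.log L + (L + 1 - q * ((k - 1 : ℕ) : ℝ))) := by
          rw [Real.exp_add, ← e2]
      _ < Real.exp 0 := by
          apply Real.exp_lt_exp.2
          linarith
      _ = 1 := Real.exp_zero
  rw [← hkk] at hphi1
  linarith

theorem expectation_threshold_near_kzero (p : ℕ → ℝ) (hp : ∀ n, p n ∈ Set.Ioo (0 : ℝ) 1)
    (h1 : Tendsto (fun n : ℕ => (n : ℝ) * p n) atTop atTop)
    (h2 : Tendsto (fun n : ℕ => p n * (Real.log n) ^ 2) atTop (nhds 0)) :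
    ∀ᶠ n : ℕ in atTop,
      sSup {k : ℕ | 1 ≤ k ∧ k ≤ n ∧ 1 ≤ phi n k (p n)} = kzero p n ∨
      sSup {k : ℕ | 1 ≤ k ∧ k ≤ n ∧ 1 ≤ phi n k (p n)} = kzero p n + 1 := by
  have E1 : ∀ᶠ n : ℕ in atTop, Real.exp 100 ≤ (n:ℝ) * p n := h1.eventually_ge_atTop _
  have E2 : ∀ᶠ n : ℕ in atTop, p n * (Real.log n)^2 < 1/100 :=
    h2.eventually (gt_mem_nhds (by norm_num))
  have E3 : ∀ᶠ n : ℕ in atTop, 3 ≤ n := eventually_ge_atTop 3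
  filter_upwards [E1, E2, E3] with n he1 he2 he3
  have hq0 : 0 < p n := (hp n).1
  have hnpos : (0:ℝ) < (n:ℝ) := by exact_mod_cast (show 0 < n by omega)
  have hlogn : (1:ℝ) ≤ Real.log n := by
    rw [Real.le_log_iff_exp_le hnpos]
    calc Real.exp 1 ≤ 2.7182818286 := le_of_lt Real.exp_one_lt_d9
      _ ≤ (3:ℝ) := by norm_num
      _ ≤ (n:ℝ) := by exact_mod_cast he3
  have hq1 : p n ≤ 1/100 := by
    have h4 : (1:ℝ) ≤ (Real.log n)^2 := by nlinarith
    nlinarith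
  have hL100 : 100 ≤ Real.log ((n:ℝ) * p n) := by
    rw [Real.le_log_iff_exp_le (lt_of_lt_of_le (Real.exp_pos 100) he1)]
    exact he1
  have := main_fixed n (p n) hq0 hq1 hL100
  unfold kzero
  exact this
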